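/- In the group G = ⟨a, b | a^8 = b^3 = (ab)^2 = (a^2b^2)^3 = (a^4b^2)^3 = 1⟩, the element a has order exactly 8 and b has order exactly 3. -/

import Mathlib

def octaRels : Set (FreeGroup (Fin 2)) :=
  { (FreeGroup.of 0) ^ 8,
    (FreeGroup.of 1) ^ 3,
    (FreeGroup.of 0 * FreeGroup.of 1) ^ 2,
    ((FreeGroup.of 0) ^ 2 * (FreeGroup.of 1) ^ 2) ^ 3,
    ((FreeGroup.of 0) ^ 4 * (FreeGroup.of 1) ^ 2) ^ 3 }

def octaA : Equiv.Perm (Fin 12) :=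
  ⟨![1,2,3,4,5,6,7,0,9,10,11,8], ![7,0,1,2,3,4,5,6,11,8,9,10], by decide, by decide⟩

def octaB : Equiv.Perm (Fin 12) :=
  ⟨![7,11,1,10,3,9,5,8,0,6,4,2], ![8,2,11,4,10,6,9,0,7,5,3,1], by decide, by decide⟩

def octaF : FreeGroup (Fin 2) →* Equiv.Perm (Fin 12) :=
  FreeGroup.lift ![octaA, octaB]

lemma octaF_rels : ∀ r ∈ octaRels, octaF r = 1 := by
  intro r hr
  rcases hr with h | h | h | h | h <;> subst h <;>
    simp only [octaF, map_pow, map_mul, FreeGroup.lift_apply_of] <;> decide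

def octaφ : PresentedGroup octaRels →* Equiv.Perm (Fin 12) :=
  PresentedGroup.toGroup octaF_rels

lemma octa_pow_a : (PresentedGroup.of (rels := octaRels) 0) ^ 8 = 1 := by
  have : ((FreeGroup.of (0 : Fin 2)) ^ 8 : FreeGroup (Fin 2)) ∈
      Subgroup.normalClosure octaRels :=
    Subgroup.subset_normalClosure (by left; rfl)
  exact (QuotientGroup.eq_one_iff _).2 this

lemma octa_pow_b : (PresentedGroup.of (rels := octaRels) 1) ^ 3 = 1 := by
  have : ((FreeGroup.of (1 : Fin 2)) ^ 3 : FreeGroup (Fin 2)) ∈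
      Subgroup.normalClosure octaRels :=
    Subgroup.subset_normalClosure (by right; left; rfl)
  exact (QuotientGroup.eq_one_iff _).2 this

/-- In `G = ⟨a, b | a⁸ = b³ = (ab)² = (a²b²)³ = (a⁴b²)³ = 1⟩`, `a` has order
exactly 8 and `b` has order exactly 3. -/
theorem octaGroup_orderOf_generators :
    orderOf (PresentedGroup.of (rels := octaRels) 0) = 8 ∧
    orderOf (PresentedGroup.of (rels := octaRels) 1) = 3 := by
  have ha : octaφ (PresentedGroup.of (rels := octaRels) 0) = octaA := by
    simp [octaφ, PresentedGroup.toGroup.of, octaF]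
    exact PresentedGroup.toGroup.of (f := ![octaA, octaB]) octaF_rels
  have hb : octaφ (PresentedGroup.of (rels := octaRels) 1) = octaB := by
    simp [octaφ, PresentedGroup.toGroup.of, octaF]
    exact PresentedGroup.toGroup.of (f := ![octaA, octaB]) octaF_rels
  constructor
  · have hnot : (PresentedGroup.of (rels := octaRels) 0) ^ (2 : ℕ) ^ 2 ≠ 1 := by
      intro h
      have : octaA ^ (4 : ℕ) = 1 := by
        have h4 : PresentedGroup.of (rels := octaRels) 0 ^ (4 : ℕ) = 1 := by
          rw [show ((4:ℕ) = 2 ^ 2) from rfl]; exact h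
        rw [← ha, ← map_pow, h4, map_one]
      exact absurd this (by decide)
    have := orderOf_eq_prime_pow (p := 2) (n := 2) hnot (by
      show _ ^ (2:ℕ) ^ 3 = 1
      norm_num
      exact octa_pow_a)
    simpa using this
  · have hne : (PresentedGroup.of (rels := octaRels) 1) ≠ 1 := by
      intro h
      have : octaB = 1 := by rw [← hb, h, map_one]
      exact absurd this (by decide)
    exact orderOf_eq_prime octa_pow_b hne
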